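/- Let $N \geq 0$ be a fixed real number and define, for each positive integer $i$ with $i > N+1$, $f_2(i) = \dfrac{(i+\tfrac{1}{2}-N)(i+\tfrac{3}{2}+N)}{\sqrt{(i-1+N)(i+1-N)(i-N)(i+N+4)}}$. Then $\lim_{i \to \infty} f_2(i)^{\,i} = 1$. -/

import Mathlib

open Filter

/-- `f₂(i) = ((i+1/2-N)(i+3/2+N)) / √((i-1+N)(i+1-N)(i-N)(i+N+4))`. -/
noncomputable def fTwo (N : ℝ) (i : ℕ) : ℝ :=
  (((i : ℝ) + 1 / 2 - N) * ((i : ℝ) + 3 / 2 + N)) /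
    Real.sqrt (((i : ℝ) - 1 + N) * ((i : ℝ) + 1 - N) * ((i : ℝ) - N) * ((i : ℝ) + N + 4))

private lemma sqrt_pow_aux (x : ℝ) (hx : 0 ≤ x) (n : ℕ) :
    Real.sqrt x ^ n = Real.sqrt (x ^ n) := by
  have : (x : ℝ) ^ n = (Real.sqrt x ^ n) ^ 2 := by
    rw [← pow_mul, mul_comm, pow_mul, Real.sq_sqrt hx]
  rw [this, Real.sqrt_sq (pow_nonneg (Real.sqrt_nonneg x) n)]

private lemma aux_key (N : ℝ) (hN : 0 ≤ N) :
    Tendsto (fun i : ℕ => (i : ℝ) *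
      ((((i : ℝ) + 1 / 2 - N) * ((i : ℝ) + 3 / 2 + N)) ^ 2 /
        (((i : ℝ) - 1 + N) * ((i : ℝ) + 1 - N) * ((i : ℝ) - N) * ((i : ℝ) + N + 4)) - 1))
      atTop (nhds 0) := by
  set num : ℝ → ℝ := fun u =>
    13 / 2 * u + (7 - 12 * N) * u ^ 2 + (13 / 2 * N ^ 2 - 11 / 2 * N + 9 / 16) * u ^ 3 with hnum
  set den : ℝ → ℝ := fun u =>
    (1 - (1 - N) * u) * (1 + (1 - N) * u) * (1 - N * u) * (1 + (N + 4) * u) with hden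
  have hu : Tendsto (fun i : ℕ => 1 / (i : ℝ)) atTop (nhds 0) :=
    tendsto_one_div_atTop_nhds_zero_nat
  have hnum0 : Tendsto (fun i : ℕ => num (1 / (i : ℝ))) atTop (nhds 0) := by
    have hc : Continuous num := by fun_prop
    have : num 0 = 0 := by simp [hnum]
    simpa [this, Function.comp_def] using (hc.tendsto 0).comp hu
  have hden0 : Tendsto (fun i : ℕ => den (1 / (i : ℝ))) atTop (nhds 1) := by
    have hc : Continuous den := by fun_prop
    have : den 0 = 1 := by simp [hden]
    simpa [this, Function.comp_def] using (hc.tendsto 0).comp hu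
  have hdiv : Tendsto (fun i : ℕ => num (1 / (i : ℝ)) / den (1 / (i : ℝ))) atTop (nhds 0) := by
    simpa [Pi.div_def] using hnum0.div hden0 one_ne_zero
  refine hdiv.congr' ?_
  have hev : ∀ᶠ i : ℕ in atTop, (N + 2 : ℝ) ≤ (i : ℝ) :=
    tendsto_natCast_atTop_atTop.eventually_ge_atTop (N + 2)
  filter_upwards [hev] with i hi
  have hi0 : (0 : ℝ) < (i : ℝ) := by linarith
  have h1 : (0 : ℝ) < (i : ℝ) - 1 + N := by linarith
  have h2 : (0 : ℝ) < (i : ℝ) + 1 - N := by linarith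
  have h3 : (0 : ℝ) < (i : ℝ) - N := by linarith
  have h4 : (0 : ℝ) < (i : ℝ) + N + 4 := by linarith
  have hd1 : 1 - (1 - N) * (1 / (i : ℝ)) ≠ 0 := by
    have : 1 - (1 - N) * (1 / (i : ℝ)) = ((i : ℝ) - 1 + N) / (i : ℝ) := by
      field_simp; ring
    rw [this]; positivity
  have hd2 : 1 + (1 - N) * (1 / (i : ℝ)) ≠ 0 := by
    have : 1 + (1 - N) * (1 / (i : ℝ)) = ((i : ℝ) + 1 - N) / (i : ℝ) := by
      field_simp; ring
    rw [this]; positivity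
  have hd3 : 1 - N * (1 / (i : ℝ)) ≠ 0 := by
    have : 1 - N * (1 / (i : ℝ)) = ((i : ℝ) - N) / (i : ℝ) := by
      field_simp
    rw [this]; positivity
  have hd4 : 1 + (N + 4) * (1 / (i : ℝ)) ≠ 0 := by
    have : 1 + (N + 4) * (1 / (i : ℝ)) = ((i : ℝ) + N + 4) / (i : ℝ) := by
      field_simp; ring
    rw [this]; positivity
  have hi0' : ((i : ℝ)) ≠ 0 := ne_of_gt hi0
  have hBne : (((i : ℝ) - 1 + N) * ((i : ℝ) + 1 - N) * ((i : ℝ) - N) * ((i : ℝ) + N + 4)) ≠ 0 := by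
    positivity
  have h5 : num (1 / (i : ℝ)) =
      ((i : ℝ) * ((((i : ℝ) + 1 / 2 - N) * ((i : ℝ) + 3 / 2 + N)) ^ 2 -
        (((i : ℝ) - 1 + N) * ((i : ℝ) + 1 - N) * ((i : ℝ) - N) * ((i : ℝ) + N + 4)))) /
        (i : ℝ) ^ 4 := by
    simp only [hnum]
    field_simp
    ring
  have h6 : den (1 / (i : ℝ)) =
      (((i : ℝ) - 1 + N) * ((i : ℝ) + 1 - N) * ((i : ℝ) - N) * ((i : ℝ) + N + 4)) /
        (i : ℝ) ^ 4 := by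
    simp only [hden]
    field_simp
    ring
  rw [h5, h6]
  rw [div_div_div_eq]
  field_simp

theorem fTwo_pow_tendsto_one (N : ℝ) (hN : 0 ≤ N) :
    Tendsto (fun i : ℕ => fTwo N i ^ i) atTop (nhds 1) := by
  set A : ℕ → ℝ := fun i => ((i : ℝ) + 1 / 2 - N) * ((i : ℝ) + 3 / 2 + N) with hA
  set B : ℕ → ℝ := fun i =>
    ((i : ℝ) - 1 + N) * ((i : ℝ) + 1 - N) * ((i : ℝ) - N) * ((i : ℝ) + N + 4) with hB
  set x : ℕ → ℝ := fun i => A i ^ 2 / B i with hx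
  have key : Tendsto (fun i : ℕ => (i : ℝ) * (x i - 1)) atTop (nhds 0) := aux_key N hN
  have hev : ∀ᶠ i : ℕ in atTop, (N + 2 : ℝ) ≤ (i : ℝ) :=
    tendsto_natCast_atTop_atTop.eventually_ge_atTop (N + 2)
  have hxpos : ∀ᶠ i : ℕ in atTop, 0 < x i := by
    filter_upwards [hev] with i hi
    have h1 : (0 : ℝ) < (i : ℝ) - 1 + N := by linarith
    have h2 : (0 : ℝ) < (i : ℝ) + 1 - N := by linarith
    have h3 : (0 : ℝ) < (i : ℝ) - N := by linarith
    have h4 : (0 : ℝ) < (i : ℝ) + N + 4 := by linarith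
    have hA1 : (0 : ℝ) < (i : ℝ) + 1 / 2 - N := by linarith
    have hA2 : (0 : ℝ) < (i : ℝ) + 3 / 2 + N := by linarith
    have : 0 < A i := mul_pos hA1 hA2
    have hBpos : 0 < B i := by positivity
    positivity
  -- squeeze for x i ^ i
  have hxpow : Tendsto (fun i : ℕ => x i ^ i) atTop (nhds 1) := by
    have hlow : Tendsto (fun i : ℕ => 1 + (i : ℝ) * (x i - 1)) atTop (nhds 1) := by
      simpa using (tendsto_const_nhds (x := (1 : ℝ)) (f := atTop)).add key
    have hupp : Tendsto (fun i : ℕ => Real.exp ((i : ℝ) * (x i - 1))) atTop (nhds 1) := by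
      simpa [Function.comp_def] using (Real.continuous_exp.tendsto 0).comp key
    refine tendsto_of_tendsto_of_tendsto_of_le_of_le' hlow hupp ?_ ?_
    · filter_upwards [hxpos] with i hi
      have h2 : (-2 : ℝ) ≤ x i - 1 := by linarith
      have := one_add_mul_le_pow h2 i
      simpa using this
    · filter_upwards [hxpos] with i hi
      have h1 : x i ^ i ≤ Real.exp (x i - 1) ^ i := by
        apply pow_le_pow_left₀ hi.le
        have := Real.add_one_le_exp (x i - 1)
        linarith
      calc x i ^ i ≤ Real.exp (x i - 1) ^ i := h1
        _ = Real.exp ((i : ℝ) * (x i - 1)) := (Real.exp_nat_mul _ i).symm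
  -- relate fTwo ^ i with sqrt of x ^ i
  have hEq : (fun i : ℕ => fTwo N i ^ i) =ᶠ[atTop] fun i => Real.sqrt (x i ^ i) := by
    filter_upwards [hev, hxpos] with i hi hxi
    have hA1 : (0 : ℝ) < (i : ℝ) + 1 / 2 - N := by linarith
    have hA2 : (0 : ℝ) < (i : ℝ) + 3 / 2 + N := by linarith
    have hApos : 0 ≤ A i := (mul_pos hA1 hA2).le
    have hf : fTwo N i = Real.sqrt (x i) := by
      rw [hx]
      rw [Real.sqrt_div (sq_nonneg (A i)) (B i), Real.sqrt_sq hApos]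
      rfl
    rw [hf, sqrt_pow_aux _ hxi.le]
  have hfin : Tendsto (fun i : ℕ => Real.sqrt (x i ^ i)) atTop (nhds 1) := by
    have := (Real.continuous_sqrt.tendsto 1).comp hxpow
    simpa [Function.comp_def] using this
  exact hfin.congr' hEq.symm
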